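/- Let τ be a density operator on ℂ^{d₁} and ξ a density operator on ℂ^{d₂} with ‖ξ‖ = 1/d₂. Then for β ∈ [0,1], the operator Y = β·I/(d₁d₂²) - (1-β)·τ ⊗ ξ ⊗ ξ on ℂ^{d₁} ⊗ ℂ^{d₂} ⊗ ℂ^{d₂} is positive semidefinite whenever β ≥ d₁‖τ‖/(1 + d₁‖τ‖). -/

import Mathlib

open ComplexOrder Kronecker Matrix

noncomputable def opNorm {n : Type*} [Fintype n] [DecidableEq n]
    (A : Matrix n n ℂ) : ℝ :=
  ‖Matrix.toEuclideanCLM (𝕜 := ℂ) A‖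

section aux
variable {m n : Type*} [Fintype m] [DecidableEq m] [Fintype n] [DecidableEq n]

lemma kron_conjT (A : Matrix m m ℂ) (B : Matrix n n ℂ) :
    (A ⊗ₖ B)ᴴ = Aᴴ ⊗ₖ Bᴴ := by
  ext ⟨i, j⟩ ⟨k, l⟩
  simp [Matrix.conjTranspose_apply, Matrix.kroneckerMap_apply]

lemma psd_kron {A : Matrix m m ℂ} {B : Matrix n n ℂ}
    (hA : A.PosSemidef) (hB : B.PosSemidef) : (A ⊗ₖ B).PosSemidef := by
  exact hA.kronecker hB

lemma psd_smul {A : Matrix m m ℂ} (hA : A.PosSemidef) {r : ℝ} (hr : 0 ≤ r) :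
    ((r : ℂ) • A).PosSemidef := by
  refine Matrix.PosSemidef.of_dotProduct_mulVec_nonneg ?_ ?_
  · simp [Matrix.IsHermitian, Matrix.conjTranspose_smul, hA.1.eq, Complex.conj_ofReal]
  · intro x
    simp only [Matrix.smul_mulVec, dotProduct_smul, smul_eq_mul]
    exact mul_nonneg (by exact_mod_cast Complex.zero_le_real.mpr hr) (hA.dotProduct_mulVec_nonneg x)

lemma psd_le_smul_one {A : Matrix m m ℂ} (hA : A.PosSemidef) {c : ℝ} (hc : opNorm A ≤ c) :
    ((c : ℂ) • (1 : Matrix m m ℂ) - A).PosSemidef := by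
  refine Matrix.PosSemidef.of_dotProduct_mulVec_nonneg ?_ ?_
  · have h1 : ((c : ℂ) • (1 : Matrix m m ℂ)).IsHermitian := by
      ext i j
      simp [Matrix.conjTranspose_apply, Matrix.one_apply, Complex.conj_ofReal, eq_comm]
      split <;> simp_all
    exact h1.sub hA.1
  · intro x
    set y : EuclideanSpace ℂ m := (WithLp.equiv 2 (m → ℂ)).symm x with hy
    set T := Matrix.toEuclideanCLM (𝕜 := ℂ) A with hT
    have hq : star x ⬝ᵥ (A *ᵥ x) = @inner ℂ _ _ y (T y) := by
      rw [hT, hy, WithLp.equiv_symm_apply, Matrix.toEuclideanCLM_toLp,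
        EuclideanSpace.inner_toLp_toLp, dotProduct_comm]
    have hxx : star x ⬝ᵥ x = ((‖y‖ ^ 2 : ℝ) : ℂ) := by
      rw [hy, WithLp.equiv_symm_apply, dotProduct_comm, ← EuclideanSpace.inner_toLp_toLp (𝕜 := ℂ) x x]
      rw [inner_self_eq_norm_sq_to_K]
      norm_cast
    have hq0 : 0 ≤ star x ⬝ᵥ (A *ᵥ x) := hA.dotProduct_mulVec_nonneg x
    have him : (star x ⬝ᵥ (A *ᵥ x)).im = 0 := by
      have := (Complex.le_def.mp hq0).2; simpa using this.symm
    have hre : (star x ⬝ᵥ (A *ᵥ x)).re ≤ c * ‖y‖ ^ 2 := by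
      have h1 : (star x ⬝ᵥ (A *ᵥ x)).re ≤ ‖@inner ℂ _ _ y (T y)‖ := by
        rw [hq]; exact Complex.re_le_norm _
      have h2 : ‖@inner ℂ _ _ y (T y)‖ ≤ ‖y‖ * ‖T y‖ := norm_inner_le_norm _ _
      have h3 : ‖T y‖ ≤ ‖T‖ * ‖y‖ := T.le_opNorm y
      have h4 : ‖T‖ ≤ c := hc
      nlinarith [norm_nonneg y, norm_nonneg (T y)]
    rw [Matrix.sub_mulVec, dotProduct_sub, Matrix.smul_mulVec,
      Matrix.one_mulVec, dotProduct_smul, hxx]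
    have hqc : star x ⬝ᵥ (A *ᵥ x) = (((star x ⬝ᵥ (A *ᵥ x)).re : ℝ) : ℂ) := by
      exact Complex.ext (by simp) (by simp [him])
    rw [hqc, smul_eq_mul, ← Complex.ofReal_mul, ← Complex.ofReal_sub,
      Complex.zero_le_real]
    linarith

lemma psd_kron_mono {A A' : Matrix m m ℂ} {B B' : Matrix n n ℂ}
    (hA : A.PosSemidef) (hB' : B'.PosSemidef)
    (h1 : (A' - A).PosSemidef) (h2 : (B' - B).PosSemidef) :
    (A' ⊗ₖ B' - A ⊗ₖ B).PosSemidef := by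
  have key : A' ⊗ₖ B' - A ⊗ₖ B = (A' - A) ⊗ₖ B' + A ⊗ₖ (B' - B) := by
    ext ⟨i, j⟩ ⟨k, l⟩
    simp [Matrix.kroneckerMap_apply, Matrix.sub_apply, Matrix.add_apply]
    ring
  rw [key]
  exact (psd_kron h1 hB').add (psd_kron hA h2)

end aux

theorem Y_posSemidef {d₁ d₂ : ℕ} [NeZero d₁] [NeZero d₂]
    (τ : Matrix (Fin d₁) (Fin d₁) ℂ) (hτ : τ.PosSemidef) (hτtr : τ.trace = 1)
    (ξ : Matrix (Fin d₂) (Fin d₂) ℂ) (hξ : ξ.PosSemidef) (hξtr : ξ.trace = 1)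
    (hξn : opNorm ξ = 1 / d₂)
    (β : ℝ) (hβ : β ∈ Set.Icc (0:ℝ) 1)
    (hthr : d₁ * opNorm τ / (1 + d₁ * opNorm τ) ≤ β) :
    ((β / (d₁ * d₂ ^ 2) : ℂ) •
        (1 : Matrix ((Fin d₁ × Fin d₂) × Fin d₂) ((Fin d₁ × Fin d₂) × Fin d₂) ℂ)
      - ((1 - β : ℝ) : ℂ) • (τ ⊗ₖ ξ ⊗ₖ ξ)).PosSemidef := by
  obtain ⟨hβ0, hβ1⟩ := hβ
  set cτ := opNorm τ with hcτ
  set cξ := opNorm ξ with hcξ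
  have hcτ0 : 0 ≤ cτ := norm_nonneg _
  have hcξ0 : 0 ≤ cξ := norm_nonneg _
  have hτ1 : ((cτ : ℂ) • 1 - τ).PosSemidef := psd_le_smul_one hτ le_rfl
  have hξ1 : ((cξ : ℂ) • 1 - ξ).PosSemidef := psd_le_smul_one hξ le_rfl
  have h2 : (((cτ : ℂ) • 1) ⊗ₖ ((cξ : ℂ) • 1) - τ ⊗ₖ ξ).PosSemidef :=
    psd_kron_mono hτ (psd_smul Matrix.PosSemidef.one hcξ0) hτ1 hξ1
  have h3 : ((((cτ : ℂ) • 1) ⊗ₖ ((cξ : ℂ) • 1)) ⊗ₖ ((cξ : ℂ) • 1)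
      - (τ ⊗ₖ ξ) ⊗ₖ ξ).PosSemidef :=
    psd_kron_mono (psd_kron hτ hξ) (psd_smul Matrix.PosSemidef.one hcξ0) h2 hξ1
  set M : ℝ := cτ * cξ * cξ with hM
  have hMrw : (((cτ : ℂ) • 1) ⊗ₖ ((cξ : ℂ) • 1)) ⊗ₖ ((cξ : ℂ) • (1 : Matrix (Fin d₂) (Fin d₂) ℂ))
      = ((M : ℝ) : ℂ) • (1 : Matrix ((Fin d₁ × Fin d₂) × Fin d₂) ((Fin d₁ × Fin d₂) × Fin d₂) ℂ) := by
    simp only [Matrix.smul_kronecker, Matrix.kronecker_smul, Matrix.one_kronecker_one,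
      smul_smul]
    congr 1
    rw [hM]
    push_cast
    ring
  rw [hMrw] at h3
  have hd₁ : (0:ℝ) < d₁ := by exact_mod_cast Nat.pos_of_ne_zero (NeZero.ne d₁)
  have hd₂ : (0:ℝ) < d₂ := by exact_mod_cast Nat.pos_of_ne_zero (NeZero.ne d₂)
  have hD : (0:ℝ) < 1 + d₁ * cτ := by positivity
  have hkey : (1 - β) * (d₁ * cτ) ≤ β := by
    have := (div_le_iff₀ hD).mp hthr
    nlinarith
  set c : ℝ := β / (d₁ * d₂ ^ 2) with hc
  have hM' : M = cτ / d₂ ^ 2 := by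
    rw [hM, hξn]
    ring
  have hscal : 0 ≤ c - (1 - β) * M := by
    rw [sub_nonneg, hc, hM', mul_div_assoc', div_le_div_iff₀ (by positivity) (by positivity)]
    nlinarith
  have hβ1' : (0:ℝ) ≤ 1 - β := by linarith
  have hcast : (↑β / (↑d₁ * ↑d₂ ^ 2) : ℂ) = ((c : ℝ) : ℂ) := by
    rw [hc]; push_cast; ring
  have hfin : (↑β / (↑d₁ * ↑d₂ ^ 2) : ℂ) •
        (1 : Matrix ((Fin d₁ × Fin d₂) × Fin d₂) ((Fin d₁ × Fin d₂) × Fin d₂) ℂ)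
      - ((1 - β : ℝ) : ℂ) • ((τ ⊗ₖ ξ) ⊗ₖ ξ)
      = (((c - (1 - β) * M : ℝ)) : ℂ) • 1
        + ((1 - β : ℝ) : ℂ) • (((M : ℝ) : ℂ) • 1 - (τ ⊗ₖ ξ) ⊗ₖ ξ) := by
    rw [hcast]
    push_cast
    module
  rw [hfin]
  exact (psd_smul Matrix.PosSemidef.one hscal).add (psd_smul h3 hβ1')
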